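/- arXiv:2202.09084 — 3 statements merged into one kernel-verified Lean document; each statement's English description precedes it below -/
import Mathlib

section
/- For every error bound ε > 0 and probability level δ ∈ (0,1) there exists m₀ ∈ ℕ such that for every m ≥ m₀ and every i ∈ {0,…,n_c}, with probability at least 1−δ (with respect to the i.i.d. sampling) the empirical mass matrix C̃⁽ⁱ⁾_m is invertible and the eDMD estimator satisfies ‖L_V^{F_i} − (C̃⁽ⁱ⁾_m)^{-1} Ã^{F_i}_m‖_F ≤ ε, where ‖·‖_F denotes the Frobenius norm. -/
open MeasureTheory ProbabilityTheory Filter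

lemma lln_aux {α : Type*} [MeasurableSpace α] {Ω : Type*} [MeasurableSpace Ω]
    (P : Measure Ω) [IsProbabilityMeasure P] (μ : Measure α)
    (Xs : ℕ → Ω → α) (hXmeas : ∀ r, Measurable (Xs r))
    (hXindep : iIndepFun Xs P)
    (hXdist : ∀ r, P.map (Xs r) = μ)
    (h : α → ℝ) (hmeas : Measurable h) (hint : Integrable h μ) :
    ∀ᵐ ω ∂P, Tendsto (fun m : ℕ =>
        (1 / m : ℝ) * ∑ r ∈ Finset.range m, h (Xs r ω)) atTop (nhds (∫ y, h y ∂μ)) := by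
  have hYint : Integrable (fun ω => h (Xs 0 ω)) P := by
    rw [← hXdist 0] at hint
    exact (integrable_map_measure hmeas.aestronglyMeasurable (hXmeas 0).aemeasurable).1 hint
  have hYindep : Pairwise (Function.onFun (IndepFun · · P) fun r ω => h (Xs r ω)) := fun r s hrs =>
    (hXindep.indepFun hrs).comp hmeas hmeas
  have hYident : ∀ r, IdentDistrib (fun ω => h (Xs r ω)) (fun ω => h (Xs 0 ω)) P P := fun r =>
    IdentDistrib.comp ⟨(hXmeas r).aemeasurable, (hXmeas 0).aemeasurable,
      by rw [hXdist r, hXdist 0]⟩ hmeas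
  have hlaw := strong_law_ae_real _ hYint hYindep hYident
  have hE : (∫ ω, h (Xs 0 ω) ∂P) = ∫ y, h y ∂μ := by
    rw [← hXdist 0, integral_map (hXmeas 0).aemeasurable hmeas.aestronglyMeasurable]
  rw [hE] at hlaw
  filter_upwards [hlaw] with ω hω
  convert hω using 2 with m
  rw [one_div, inv_mul_eq_div]

lemma integrable_aux {d : ℕ} {X : Set (EuclideanSpace ℝ (Fin d))}
    (hXcpt : IsCompact X) (hXpos : 0 < volume X)
    {h : EuclideanSpace ℝ (Fin d) → ℝ} (hc : Continuous h) :
    Integrable h ((volume X)⁻¹ • volume.restrict X) :=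
  (hc.continuousOn.integrableOn_compact hXcpt).smul_measure (ENNReal.inv_ne_top.2 hXpos.ne')

lemma tendsto_matrix_aux {N : ℕ} {X : ℕ → Matrix (Fin N) (Fin N) ℝ} {M : Matrix (Fin N) (Fin N) ℝ}
    (h : ∀ k l, Tendsto (fun m => X m k l) atTop (nhds (M k l))) :
    Tendsto X atTop (nhds M) :=
  tendsto_pi_nhds.2 fun k => tendsto_pi_nhds.2 (h k)

/-- Frobenius norm of a real `N × N` matrix. -/
noncomputable def frobeniusNorm {N : ℕ} (M : Matrix (Fin N) (Fin N) ℝ) : ℝ :=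
  Real.sqrt (∑ i, ∑ j, (M i j) ^ 2)

lemma frobeniusNorm_continuous {N : ℕ} :
    Continuous (fun M : Matrix (Fin N) (Fin N) ℝ => frobeniusNorm M) :=
  Real.continuous_sqrt.comp <| continuous_finset_sum _ fun k _ =>
    continuous_finset_sum _ fun l _ => (continuous_id.matrix_elem k l).pow 2

lemma frobeniusNorm_zero {N : ℕ} : frobeniusNorm (0 : Matrix (Fin N) (Fin N) ℝ) = 0 := by
  simp [frobeniusNorm]

/-- finite-data probabilistic error bound for the eDMD estimators of
the Galerkin-projected Koopman generators of the autonomous systems `ẋ = F_i(x)`,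
`F₀ = f`, `F_i = f + g_i`: for every `ε > 0` and `δ ∈ (0,1)` there is `m₀` such that
for all `m ≥ m₀` and all `i`, with probability at least `1 − δ` the empirical mass
matrix `C̃⁽ⁱ⁾_m` is invertible and `‖L_V^{F_i} − (C̃⁽ⁱ⁾_m)⁻¹ Ã^{F_i}_m‖_F ≤ ε`. -/
theorem eDMD_generator_error_bound {d N nc : ℕ}
    (X : Set (EuclideanSpace ℝ (Fin d))) (hXcpt : IsCompact X)
    (hXpos : 0 < volume X)
    (μ : Measure (EuclideanSpace ℝ (Fin d)))
    (hμ : μ = (volume X)⁻¹ • volume.restrict X)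
    (ψ : Fin N → EuclideanSpace ℝ (Fin d) → ℝ)
    (hψ : ∀ j, ContDiff ℝ 1 (ψ j))
    (C : Matrix (Fin N) (Fin N) ℝ)
    (hC : ∀ k l, C k l = ∫ y, ψ k y * ψ l y ∂μ)
    (hCinv : IsUnit C.det)
    (f : EuclideanSpace ℝ (Fin d) → EuclideanSpace ℝ (Fin d)) (hf : Continuous f)
    (g : Fin nc → EuclideanSpace ℝ (Fin d) → EuclideanSpace ℝ (Fin d))
    (hg : ∀ i, Continuous (g i))
    -- the autonomous vector fields F₀ = f and F_i = f + g_i: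
    (F : Fin (nc + 1) → EuclideanSpace ℝ (Fin d) → EuclideanSpace ℝ (Fin d))
    (hF0 : F 0 = f) (hFsucc : ∀ i : Fin nc, F i.succ = fun y => f y + g i y)
    -- generators applied to the dictionary: (L_{F_i} ψ_l)(y) = ⟨∇ψ_l(y), F_i(y)⟩
    (LF : Fin (nc + 1) → Fin N → EuclideanSpace ℝ (Fin d) → ℝ)
    (hLF : ∀ i l y, LF i l y = fderiv ℝ (ψ l) y (F i y))
    (A : Fin (nc + 1) → Matrix (Fin N) (Fin N) ℝ)
    (hA : ∀ i k l, A i k l = ∫ y, ψ k y * LF i l y ∂μ)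
    -- matrix representations of the Galerkin-projected generators:
    (LV : Fin (nc + 1) → Matrix (Fin N) (Fin N) ℝ)
    (hLV : ∀ i, LV i = C⁻¹ * A i)
    -- i.i.d. samples with distribution μ, for each constant control:
    {Ω : Type*} [MeasurableSpace Ω] (P : Measure Ω) [IsProbabilityMeasure P]
    (Xs : Fin (nc + 1) → ℕ → Ω → EuclideanSpace ℝ (Fin d))
    (hXmeas : ∀ i r, Measurable (Xs i r))
    (hXindep : ∀ i, iIndepFun (Xs i) P)
    (hXdist : ∀ i r, P.map (Xs i r) = μ)
    -- empirical matrices: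
    (Ct : Fin (nc + 1) → ℕ → Ω → Matrix (Fin N) (Fin N) ℝ)
    (hCt : ∀ i m ω k l,
      Ct i m ω k l = (1 / m : ℝ) * ∑ r ∈ Finset.range m, ψ k (Xs i r ω) * ψ l (Xs i r ω))
    (At : Fin (nc + 1) → ℕ → Ω → Matrix (Fin N) (Fin N) ℝ)
    (hAt : ∀ i m ω k l,
      At i m ω k l = (1 / m : ℝ) * ∑ r ∈ Finset.range m, ψ k (Xs i r ω) * LF i l (Xs i r ω)) :
    ∀ ε > 0, ∀ δ ∈ Set.Ioo (0 : ℝ) 1, ∃ m₀ : ℕ, ∀ m ≥ m₀, ∀ i : Fin (nc + 1),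
      1 - δ ≤ (P {ω | IsUnit (Ct i m ω).det ∧
        frobeniusNorm (LV i - (Ct i m ω)⁻¹ * At i m ω) ≤ ε}).toReal := by
  intro ε hε δ hδ
  have hψc : ∀ l, Continuous (ψ l) := fun l => (hψ l).continuous
  have hFc : ∀ i, Continuous (F i) := by
    intro i
    induction i using Fin.cases with
    | zero => rw [hF0]; exact hf
    | succ j => rw [hFsucc]; exact hf.add (hg j)
  have hLFc : ∀ i l, Continuous (LF i l) := by
    intro i l
    have heq : LF i l = fun y => fderiv ℝ (ψ l) y (F i y) := funext (hLF i l)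
    rw [heq]
    exact ((hψ l).continuous_fderiv one_ne_zero).clm_apply (hFc i)
  have hdetC : C.det ≠ 0 := by
    simpa [isUnit_iff_ne_zero] using hCinv
  -- per-i existence of m₀
  have key : ∀ i : Fin (nc + 1), ∃ m₀ : ℕ, ∀ m ≥ m₀,
      ENNReal.ofReal (1 - δ) ≤ P {ω | IsUnit (Ct i m ω).det ∧
        frobeniusNorm (LV i - (Ct i m ω)⁻¹ * At i m ω) ≤ ε} := by
    intro i
    -- entrywise LLN for Ct
    have hCtend : ∀ k l : Fin N, ∀ᵐ ω ∂P,
        Tendsto (fun m => Ct i m ω k l) atTop (nhds (C k l)) := by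
      intro k l
      have hcont : Continuous fun y => ψ k y * ψ l y := (hψc k).mul (hψc l)
      have hint : Integrable (fun y => ψ k y * ψ l y) μ := by
        rw [hμ]; exact integrable_aux hXcpt hXpos hcont
      have := lln_aux P μ (Xs i) (hXmeas i) (hXindep i) (hXdist i) _ hcont.measurable hint
      rw [hC k l]
      filter_upwards [this] with ω hω
      have heq : (fun m : ℕ => Ct i m ω k l)
          = fun m : ℕ => (1 / m : ℝ) * ∑ r ∈ Finset.range m, ψ k (Xs i r ω) * ψ l (Xs i r ω) :=
        funext fun m => hCt i m ω k l
      rw [heq]; exact hω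
    have hAtend : ∀ k l : Fin N, ∀ᵐ ω ∂P,
        Tendsto (fun m => At i m ω k l) atTop (nhds (A i k l)) := by
      intro k l
      have hcont : Continuous fun y => ψ k y * LF i l y := (hψc k).mul (hLFc i l)
      have hint : Integrable (fun y => ψ k y * LF i l y) μ := by
        rw [hμ]; exact integrable_aux hXcpt hXpos hcont
      have := lln_aux P μ (Xs i) (hXmeas i) (hXindep i) (hXdist i) _ hcont.measurable hint
      rw [hA i k l]
      filter_upwards [this] with ω hω
      have heq : (fun m : ℕ => At i m ω k l)
          = fun m : ℕ => (1 / m : ℝ) * ∑ r ∈ Finset.range m, ψ k (Xs i r ω) * LF i l (Xs i r ω) :=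
        funext fun m => hAt i m ω k l
      rw [heq]; exact hω
    have hae : ∀ᵐ ω ∂P, Tendsto (fun m => Ct i m ω) atTop (nhds C) ∧
        Tendsto (fun m => At i m ω) atTop (nhds (A i)) := by
      have h1 : ∀ᵐ ω ∂P, ∀ k l, Tendsto (fun m => Ct i m ω k l) atTop (nhds (C k l)) :=
        ae_all_iff.2 fun k => ae_all_iff.2 fun l => hCtend k l
      have h2 : ∀ᵐ ω ∂P, ∀ k l, Tendsto (fun m => At i m ω k l) atTop (nhds (A i k l)) :=
        ae_all_iff.2 fun k => ae_all_iff.2 fun l => hAtend k l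
      filter_upwards [h1, h2] with ω hω1 hω2
      exact ⟨tendsto_matrix_aux hω1, tendsto_matrix_aux hω2⟩
    -- eventually the good event holds, a.s.
    have hev : ∀ᵐ ω ∂P, ∀ᶠ m in atTop, ω ∈ {ω | IsUnit (Ct i m ω).det ∧
        frobeniusNorm (LV i - (Ct i m ω)⁻¹ * At i m ω) ≤ ε} := by
      filter_upwards [hae] with ω hω
      obtain ⟨hωC, hωA⟩ := hω
      have hdet : Tendsto (fun m => (Ct i m ω).det) atTop (nhds C.det) :=
        ((continuous_id.matrix_det).tendsto C).comp hωC
      have h1 : ∀ᶠ m in atTop, (Ct i m ω).det ≠ 0 := hdet.eventually_ne hdetC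
      have hRinv : ContinuousAt Ring.inverse C.det := by
        rw [Ring.inverse_eq_inv']
        exact continuousAt_inv₀ hdetC
      have hinv : Tendsto (fun m => (Ct i m ω)⁻¹) atTop (nhds C⁻¹) :=
        ((continuousAt_matrix_inv C hRinv).tendsto).comp hωC
      have hprod : Tendsto (fun m => (Ct i m ω)⁻¹ * At i m ω) atTop (nhds (C⁻¹ * A i)) :=
        hinv.mul hωA
      have hsub : Tendsto (fun m => LV i - (Ct i m ω)⁻¹ * At i m ω) atTop
          (nhds (LV i - C⁻¹ * A i)) := tendsto_const_nhds.sub hprod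
      have hfrob : Tendsto (fun m => frobeniusNorm (LV i - (Ct i m ω)⁻¹ * At i m ω)) atTop
          (nhds 0) := by
        have : LV i - C⁻¹ * A i = 0 := by rw [hLV i, sub_self]
        rw [this] at hsub
        simpa [frobeniusNorm_zero, Function.comp_def] using (frobeniusNorm_continuous.tendsto 0).comp hsub
      have h2 : ∀ᶠ m in atTop,
          frobeniusNorm (LV i - (Ct i m ω)⁻¹ * At i m ω) ≤ ε :=
        hfrob.eventually_le_const hε
      filter_upwards [h1, h2] with m hm1 hm2
      exact ⟨isUnit_iff_ne_zero.2 hm1, hm2⟩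
    -- pass from a.s.-eventually to uniform probability bound
    set E : ℕ → Set Ω := fun m => {ω | IsUnit (Ct i m ω).det ∧
        frobeniusNorm (LV i - (Ct i m ω)⁻¹ * At i m ω) ≤ ε} with hE
    set B : ℕ → Set Ω := fun m => ⋂ k ∈ Set.Ici m, E k with hB
    have hBmono : Monotone B := by
      intro a b hab
      exact Set.biInter_subset_biInter_left fun k hk => le_trans hab hk
    have hBsub : ∀ {m k}, m ≤ k → B m ⊆ E k := fun {m k} hmk =>
      Set.biInter_subset_of_mem hmk
    have hUnion : P (⋃ m, B m) = 1 := by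
      have hsub : {ω | ∀ᶠ m in atTop, ω ∈ E m} ⊆ ⋃ m, B m := by
        intro ω hω
        obtain ⟨m₀, hm₀⟩ := eventually_atTop.1 hω
        exact Set.mem_iUnion.2 ⟨m₀, Set.mem_iInter₂.2 fun k hk => hm₀ k hk⟩
      have hcompl : P ((⋃ m, B m)ᶜ) = 0 := by
        refine measure_mono_null ?_ hev
        intro ω hω hmem
        exact hω (hsub hmem)
      have h1 : (1 : ENNReal) ≤ P (⋃ m, B m) := by
        calc (1 : ENNReal) = P Set.univ := (measure_univ (μ := P)).symm
          _ = P ((⋃ m, B m) ∪ (⋃ m, B m)ᶜ) := by rw [Set.union_compl_self]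
          _ ≤ P (⋃ m, B m) + P ((⋃ m, B m)ᶜ) := measure_union_le _ _
          _ = P (⋃ m, B m) := by rw [hcompl, add_zero]
      exact le_antisymm prob_le_one h1
    have htend : Tendsto (fun m => P (B m)) atTop (nhds 1) := by
      have := tendsto_measure_iUnion_atTop (μ := P) hBmono
      rwa [hUnion] at this
    have hlt : ENNReal.ofReal (1 - δ) < 1 := by
      rw [← ENNReal.ofReal_one]
      exact ENNReal.ofReal_lt_ofReal_iff_of_nonneg (by linarith [hδ.2]) |>.2 (by linarith [hδ.1])
    have hfin : ∀ᶠ m in atTop, ENNReal.ofReal (1 - δ) < P (B m) :=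
      (tendsto_order.1 htend).1 _ hlt
    obtain ⟨m₀, hm₀⟩ := eventually_atTop.1 hfin
    refine ⟨m₀, fun m hm => ?_⟩
    exact le_trans (hm₀ m₀ le_rfl).le (measure_mono (hBsub hm))
  -- combine over i
  choose m₀ hm₀ using key
  refine ⟨Finset.univ.sup m₀, fun m hm i => ?_⟩
  have hge : m₀ i ≤ m := le_trans (Finset.le_sup (Finset.mem_univ i)) hm
  have := hm₀ i m hge
  have htr : (1 - δ) = (ENNReal.ofReal (1 - δ)).toReal :=
    (ENNReal.toReal_ofReal (by linarith [hδ.2])).symm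
  rw [htr]
  exact ENNReal.toReal_mono (measure_ne_top P _) this
end

section
/- For every error bound ε̃ > 0, probability level δ̃ ∈ (0,1), horizon T > 0 and every measurable essentially bounded control u : [0,T] → ℝ^{n_c}, there exists m₀ ∈ ℕ such that for every m ≥ m₀, with probability at least 1−δ̃ the following holds: all empirical mass matrices C̃⁽ⁱ⁾_m, i ∈ {0,…,n_c}, are invertible and ‖L_V^u(t) − L̃_m^u(t)‖_F ≤ ε̃ for almost every t ∈ [0,T]; in particular, ess inf_{t∈[0,T]} ℙ(‖L_V^u(t) − L̃_m^u(t)‖_F ≤ ε̃) ≥ 1−δ̃. -/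
open MeasureTheory ProbabilityTheory Filter Topology

section FrobHelpers
attribute [local instance] Matrix.frobeniusNormedAddCommGroup Matrix.frobeniusNormedSpace

lemma frobeniusNorm_eq_norm {N : ℕ} (M : Matrix (Fin N) (Fin N) ℝ) : frobeniusNorm M = ‖M‖ := by
  rw [Matrix.frobenius_norm_def, frobeniusNorm, Real.sqrt_eq_rpow]
  congr 1
  refine Finset.sum_congr rfl fun i _ => Finset.sum_congr rfl fun j _ => ?_
  rw [Real.norm_eq_abs, show (2:ℝ) = ((2:ℕ):ℝ) by norm_num, Real.rpow_natCast, sq_abs]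

lemma frob_comb_bound {N nc : ℕ} (D : Fin (nc+1) → Matrix (Fin N) (Fin N) ℝ)
    (c : Fin nc → ℝ) (ε' K' : ℝ) (hK' : 0 ≤ K')
    (hD : ∀ j, frobeniusNorm (D j) ≤ ε') (hc : ∀ i, |c i| ≤ K') :
    frobeniusNorm (D 0 + ∑ i : Fin nc, c i • (D i.succ - D 0)) ≤ ε' * (1 + 2 * nc * K') := by
  have hε' : 0 ≤ ε' := le_trans (by rw [frobeniusNorm]; positivity) (hD 0)
  simp only [frobeniusNorm_eq_norm] at hD ⊢
  calc ‖D 0 + ∑ i : Fin nc, c i • (D i.succ - D 0)‖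
      ≤ ‖D 0‖ + ∑ i : Fin nc, ‖c i • (D i.succ - D 0)‖ :=
        (norm_add_le _ _).trans (by gcongr; exact norm_sum_le _ _)
    _ ≤ ε' + ∑ _i : Fin nc, K' * (ε' + ε') := by
        gcongr with i hi
        · exact hD 0
        · rw [norm_smul, Real.norm_eq_abs]
          exact mul_le_mul (hc i) ((norm_sub_le _ _).trans (add_le_add (hD _) (hD _)))
            (norm_nonneg _) hK'
    _ = ε' * (1 + 2 * nc * K') := by
        rw [Finset.sum_const, Finset.card_univ, Fintype.card_fin, nsmul_eq_mul]; ring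

end FrobHelpers

lemma matrix_inv_contAt {N : ℕ} {C : Matrix (Fin N) (Fin N) ℝ} (hd : C.det ≠ 0) :
    ContinuousAt (fun M : Matrix (Fin N) (Fin N) ℝ => M⁻¹) C := by
  have h : (fun M : Matrix (Fin N) (Fin N) ℝ => M⁻¹)
      = fun M => M.det⁻¹ • M.adjugate := by
    funext M; rw [Matrix.inv_def, Ring.inverse_eq_inv]
  rw [h]
  exact (continuous_id.matrix_det.continuousAt.inv₀ hd).smul
    continuous_id.matrix_adjugate.continuousAt

lemma frob_continuous {N : ℕ} : Continuous (frobeniusNorm (N := N)) := by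
  unfold frobeniusNorm
  exact Real.continuous_sqrt.comp <| continuous_finset_sum _ fun i _ =>
    continuous_finset_sum _ fun j _ => ((continuous_apply j).comp (continuous_apply i)).pow 2

lemma slln_helper {d : ℕ} {Ω : Type*} [MeasurableSpace Ω] (P : Measure Ω)
    [IsProbabilityMeasure P]
    (μ : Measure (EuclideanSpace ℝ (Fin d)))
    (Xs : ℕ → Ω → EuclideanSpace ℝ (Fin d))
    (hXmeas : ∀ r, Measurable (Xs r))
    (hXindep : iIndepFun Xs P)
    (hXdist : ∀ r, P.map (Xs r) = μ)
    (h : EuclideanSpace ℝ (Fin d) → ℝ) (hcont : Continuous h)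
    (hint : Integrable h μ) :
    ∀ᵐ ω ∂P, Tendsto (fun m : ℕ => (1 / m : ℝ) * ∑ r ∈ Finset.range m, h (Xs r ω))
      atTop (𝓝 (∫ y, h y ∂μ)) := by
  have hint0 : Integrable (fun ω => h (Xs 0 ω)) P := by
    have : Integrable h (P.map (Xs 0)) := by rw [hXdist]; exact hint
    exact (integrable_map_measure hcont.aestronglyMeasurable
      (hXmeas 0).aemeasurable).mp this
  have hindep : Pairwise (Function.onFun (IndepFun · · P) fun r ω => h (Xs r ω)) :=
    fun r s hrs => (hXindep.indepFun hrs).comp hcont.measurable hcont.measurable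
  have hident : ∀ r, IdentDistrib (fun ω => h (Xs r ω)) (fun ω => h (Xs 0 ω)) P P :=
    fun r => (⟨(hXmeas r).aemeasurable, (hXmeas 0).aemeasurable,
      by rw [hXdist, hXdist]⟩ : IdentDistrib (Xs r) (Xs 0) P P).comp hcont.measurable
  have hmean : (∫ ω, h (Xs 0 ω) ∂P) = ∫ y, h y ∂μ := by
    rw [← hXdist 0, integral_map (hXmeas 0).aemeasurable hcont.aestronglyMeasurable]
  have := strong_law_ae_real (fun r ω => h (Xs r ω)) hint0 hindep hident
  rw [hmean] at this
  filter_upwards [this] with ω hω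
  have heq : (fun m : ℕ => (1 / m : ℝ) * ∑ r ∈ Finset.range m, h (Xs r ω))
      = fun m : ℕ => (∑ r ∈ Finset.range m, h (Xs r ω)) / m := by
    funext m; rw [one_div, inv_mul_eq_div]
  rw [heq]; exact hω

/-- finite-data probabilistic error bound for the bilinear surrogate
generator: for every `ε̃ > 0`, `δ̃ ∈ (0,1)`, `T > 0` and measurable essentially
bounded control `u`, there is `m₀` such that for all `m ≥ m₀`, with probability at
least `1 − δ̃` all empirical mass matrices are invertible and
`‖L_V^u(t) − L̃_m^u(t)‖_F ≤ ε̃` for a.e. `t ∈ [0,T]`; in particular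
`ess inf_{t∈[0,T]} ℙ(‖L_V^u(t) − L̃_m^u(t)‖_F ≤ ε̃) ≥ 1 − δ̃`. -/
theorem eDMD_bilinear_generator_error_bound {d N nc : ℕ}
    (X : Set (EuclideanSpace ℝ (Fin d))) (hXcpt : IsCompact X)
    (hXpos : 0 < volume X)
    (μ : Measure (EuclideanSpace ℝ (Fin d)))
    (hμ : μ = (volume X)⁻¹ • volume.restrict X)
    (ψ : Fin N → EuclideanSpace ℝ (Fin d) → ℝ)
    (hψ : ∀ j, ContDiff ℝ 1 (ψ j))
    (C : Matrix (Fin N) (Fin N) ℝ)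
    (hC : ∀ k l, C k l = ∫ y, ψ k y * ψ l y ∂μ)
    (hCinv : IsUnit C.det)
    (f : EuclideanSpace ℝ (Fin d) → EuclideanSpace ℝ (Fin d)) (hf : Continuous f)
    (g : Fin nc → EuclideanSpace ℝ (Fin d) → EuclideanSpace ℝ (Fin d))
    (hg : ∀ i, Continuous (g i))
    (F : Fin (nc + 1) → EuclideanSpace ℝ (Fin d) → EuclideanSpace ℝ (Fin d))
    (hF0 : F 0 = f) (hFsucc : ∀ i : Fin nc, F i.succ = fun y => f y + g i y)
    (LF : Fin (nc + 1) → Fin N → EuclideanSpace ℝ (Fin d) → ℝ)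
    (hLF : ∀ i l y, LF i l y = fderiv ℝ (ψ l) y (F i y))
    (A : Fin (nc + 1) → Matrix (Fin N) (Fin N) ℝ)
    (hA : ∀ i k l, A i k l = ∫ y, ψ k y * LF i l y ∂μ)
    (LV : Fin (nc + 1) → Matrix (Fin N) (Fin N) ℝ)
    (hLV : ∀ i, LV i = C⁻¹ * A i)
    {Ω : Type*} [MeasurableSpace Ω] (P : Measure Ω) [IsProbabilityMeasure P]
    (Xs : Fin (nc + 1) → ℕ → Ω → EuclideanSpace ℝ (Fin d))
    (hXmeas : ∀ i r, Measurable (Xs i r))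
    (hXindep : ∀ i, iIndepFun (Xs i) P)
    (hXdist : ∀ i r, P.map (Xs i r) = μ)
    (Ct : Fin (nc + 1) → ℕ → Ω → Matrix (Fin N) (Fin N) ℝ)
    (hCt : ∀ i m ω k l,
      Ct i m ω k l = (1 / m : ℝ) * ∑ r ∈ Finset.range m, ψ k (Xs i r ω) * ψ l (Xs i r ω))
    (At : Fin (nc + 1) → ℕ → Ω → Matrix (Fin N) (Fin N) ℝ)
    (hAt : ∀ i m ω k l,
      At i m ω k l = (1 / m : ℝ) * ∑ r ∈ Finset.range m, ψ k (Xs i r ω) * LF i l (Xs i r ω))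
    -- the eDMD estimators of the generators:
    (Lt : Fin (nc + 1) → ℕ → Ω → Matrix (Fin N) (Fin N) ℝ)
    (hLt : ∀ i m ω, Lt i m ω = (Ct i m ω)⁻¹ * At i m ω)
    -- horizon and measurable, essentially bounded control:
    (T : ℝ) (hT : 0 < T)
    (u : ℝ → Fin nc → ℝ) (hu : Measurable u)
    (hubdd : ∃ K : ℝ, ∀ᵐ t ∂(volume.restrict (Set.Icc (0 : ℝ) T)), ∀ i, |u t i| ≤ K)
    -- the bilinear surrogate generators:
    (LVu : ℝ → Matrix (Fin N) (Fin N) ℝ)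
    (hLVu : ∀ t, LVu t = LV 0 + ∑ i : Fin nc, u t i • (LV i.succ - LV 0))
    (Ltu : ℕ → Ω → ℝ → Matrix (Fin N) (Fin N) ℝ)
    (hLtu : ∀ m ω t,
      Ltu m ω t = Lt 0 m ω + ∑ i : Fin nc, u t i • (Lt i.succ m ω - Lt 0 m ω)) :
    ∀ ε > 0, ∀ δ ∈ Set.Ioo (0 : ℝ) 1, ∃ m₀ : ℕ, ∀ m ≥ m₀,
      (1 - δ ≤ (P {ω | (∀ i, IsUnit (Ct i m ω).det) ∧
          ∀ᵐ t ∂(volume.restrict (Set.Icc (0 : ℝ) T)),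
            frobeniusNorm (LVu t - Ltu m ω t) ≤ ε}).toReal) ∧
      (∀ᵐ t ∂(volume.restrict (Set.Icc (0 : ℝ) T)),
        1 - δ ≤ (P {ω | frobeniusNorm (LVu t - Ltu m ω t) ≤ ε}).toReal) := by
  intro ε hε δ hδ
  obtain ⟨K, hK⟩ := hubdd
  set K' := max K 0 with hK'def
  have hK'0 : (0:ℝ) ≤ K' := le_max_right _ _
  have hden : (0:ℝ) < 1 + 2 * nc * K' := by positivity
  set ε' := ε / (1 + 2 * nc * K') with hε'def
  have hε' : 0 < ε' := div_pos hε hden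
  -- integrability of continuous functions w.r.t. μ
  have hintc : ∀ h : EuclideanSpace ℝ (Fin d) → ℝ, Continuous h → Integrable h μ := by
    intro h hc
    rw [hμ]
    exact (hc.continuousOn.integrableOn_compact hXcpt).smul_measure
      (by simp [ENNReal.inv_ne_top, hXpos.ne'])
  -- continuity of LF
  have hLFcont : ∀ i l, Continuous (LF i l) := by
    intro i l
    have hFc : Continuous (F i) := by
      induction i using Fin.cases with
      | zero => rw [hF0]; exact hf
      | succ j => rw [hFsucc j]; exact hf.add (hg j)
    have h1 : Continuous fun y => fderiv ℝ (ψ l) y := (hψ l).continuous_fderiv one_ne_zero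
    have h2 : LF i l = fun y => (fderiv ℝ (ψ l) y) (F i y) := funext (hLF i l)
    rw [h2]; exact h1.clm_apply hFc
  -- entrywise SLLN
  have hCae : ∀ i (k l : Fin N), ∀ᵐ ω ∂P,
      Tendsto (fun m => Ct i m ω k l) atTop (𝓝 (C k l)) := by
    intro i k l
    have hc : Continuous fun y => ψ k y * ψ l y := (hψ k).continuous.mul (hψ l).continuous
    have h1 := slln_helper P μ (Xs i) (hXmeas i) (hXindep i) (hXdist i) _ hc (hintc _ hc)
    rw [← hC k l] at h1
    filter_upwards [h1] with ω hω
    have heq : (fun m => Ct i m ω k l) = fun m : ℕ =>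
        (1 / m : ℝ) * ∑ r ∈ Finset.range m, ψ k (Xs i r ω) * ψ l (Xs i r ω) := by
      funext m; rw [hCt]
    rw [heq]; exact hω
  have hAae : ∀ i (k l : Fin N), ∀ᵐ ω ∂P,
      Tendsto (fun m => At i m ω k l) atTop (𝓝 (A i k l)) := by
    intro i k l
    have hc : Continuous fun y => ψ k y * LF i l y := (hψ k).continuous.mul (hLFcont i l)
    have h1 := slln_helper P μ (Xs i) (hXmeas i) (hXindep i) (hXdist i) _ hc (hintc _ hc)
    rw [← hA i k l] at h1
    filter_upwards [h1] with ω hω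
    have heq : (fun m => At i m ω k l) = fun m : ℕ =>
        (1 / m : ℝ) * ∑ r ∈ Finset.range m, ψ k (Xs i r ω) * LF i l (Xs i r ω) := by
      funext m; rw [hAt]
    rw [heq]; exact hω
  -- matrix convergence a.s.
  have hae : ∀ᵐ ω ∂P, ∀ i, Tendsto (fun m => Ct i m ω) atTop (𝓝 C) ∧
      Tendsto (fun m => At i m ω) atTop (𝓝 (A i)) := by
    rw [ae_all_iff]
    intro i
    have h1 : ∀ᵐ ω ∂P, ∀ (k l : Fin N), Tendsto (fun m => Ct i m ω k l) atTop (𝓝 (C k l)) := by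
      rw [ae_all_iff]; intro k; rw [ae_all_iff]; exact hCae i k
    have h2 : ∀ᵐ ω ∂P, ∀ (k l : Fin N), Tendsto (fun m => At i m ω k l) atTop (𝓝 (A i k l)) := by
      rw [ae_all_iff]; intro k; rw [ae_all_iff]; exact hAae i k
    filter_upwards [h1, h2] with ω hω1 hω2
    exact ⟨tendsto_pi_nhds.mpr fun k => tendsto_pi_nhds.mpr (hω1 k),
      tendsto_pi_nhds.mpr fun k => tendsto_pi_nhds.mpr (hω2 k)⟩
  have hdet : C.det ≠ 0 := by simpa [isUnit_iff_ne_zero] using hCinv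
  -- eventually good a.s.
  have haeB : ∀ᵐ ω ∂P, ∀ᶠ m in atTop, ∀ i,
      IsUnit (Ct i m ω).det ∧ frobeniusNorm (LV i - Lt i m ω) ≤ ε' := by
    filter_upwards [hae] with ω hω
    rw [eventually_all]
    intro i
    obtain ⟨hCt', hAt'⟩ := hω i
    have hdtend : Tendsto (fun m => (Ct i m ω).det) atTop (𝓝 C.det) :=
      (continuous_id.matrix_det.continuousAt.tendsto).comp hCt'
    have hne : ∀ᶠ m in atTop, (Ct i m ω).det ≠ 0 := hdtend (isOpen_ne.mem_nhds hdet)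
    have hLtend : Tendsto (fun m => Lt i m ω) atTop (𝓝 (LV i)) := by
      have hmul : Continuous fun p : Matrix (Fin N) (Fin N) ℝ × Matrix (Fin N) (Fin N) ℝ =>
          p.1 * p.2 := continuous_fst.matrix_mul continuous_snd
      have h1 : Tendsto (fun m => ((Ct i m ω)⁻¹, At i m ω)) atTop (𝓝 (C⁻¹, A i)) :=
        (((matrix_inv_contAt hdet).tendsto).comp hCt').prodMk_nhds hAt'
      have h2 := (hmul.continuousAt (x := (C⁻¹, A i))).tendsto.comp h1
      have heq : (fun m => Lt i m ω) = fun m => (Ct i m ω)⁻¹ * At i m ω :=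
        funext fun m => hLt i m ω
      rw [heq, hLV i]; exact h2
    have hfr : Tendsto (fun m => frobeniusNorm (LV i - Lt i m ω)) atTop (𝓝 0) := by
      have h3 : Tendsto (fun m => LV i - Lt i m ω) atTop (𝓝 (LV i - LV i)) :=
        tendsto_const_nhds.sub hLtend
      rw [sub_self] at h3
      have h4 := (frob_continuous.continuousAt (x := (0 : Matrix (Fin N) (Fin N) ℝ))).tendsto.comp h3
      simpa [Function.comp_def, frobeniusNorm] using h4
    have hfr' : ∀ᶠ m in atTop, frobeniusNorm (LV i - Lt i m ω) < ε' :=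
      hfr.eventually_lt_const hε'
    filter_upwards [hne, hfr'] with m h1 h2
    exact ⟨isUnit_iff_ne_zero.mpr h1, h2.le⟩
  -- set of good ω at stage m
  set B : ℕ → Set Ω := fun m => {ω | ∀ i,
    IsUnit (Ct i m ω).det ∧ frobeniusNorm (LV i - Lt i m ω) ≤ ε'} with hBdef
  set S : ℕ → Set Ω := fun m₀ => ⋂ m, ⋂ (_ : m ≥ m₀), B m with hSdef
  have hmono : Monotone S := by
    intro a b hab x hx
    simp only [hSdef, Set.mem_iInter] at hx ⊢
    exact fun m hm => hx m (hab.trans hm)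
  have hUnion : P (⋃ m₀, S m₀) = 1 := by
    have hsub : ∀ᵐ ω ∂P, ω ∈ ⋃ m₀, S m₀ := by
      filter_upwards [haeB] with ω hω
      obtain ⟨m₀, hm₀⟩ := eventually_atTop.mp hω
      exact Set.mem_iUnion.mpr ⟨m₀, by
        simp only [hSdef, Set.mem_iInter]; exact fun m hm => hm₀ m hm⟩
    have h0 : P {ω | ω ∉ ⋃ m₀, S m₀} = 0 := ae_iff.mp hsub
    refine le_antisymm prob_le_one ?_
    have h1 : (1:ENNReal) ≤ P (⋃ m₀, S m₀) + P {ω | ω ∉ ⋃ m₀, S m₀} := by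
      rw [← measure_univ (μ := P)]
      refine (measure_mono ?_).trans (measure_union_le _ _)
      intro x _
      by_cases hx : x ∈ ⋃ m₀, S m₀
      · exact Or.inl hx
      · exact Or.inr hx
    rwa [h0, add_zero] at h1
  have hsup : ⨆ m₀, P (S m₀) = 1 := by
    rw [← hmono.directed_le.measure_iUnion]; exact hUnion
  set δ' := ENNReal.ofReal δ with hδ'def
  have hδ'0 : δ' ≠ 0 := by simp [hδ'def, ENNReal.ofReal_eq_zero, not_le, hδ.1]
  have hlt : (1 : ENNReal) - δ' < ⨆ m₀, P (S m₀) := by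
    rw [hsup]; exact ENNReal.sub_lt_self ENNReal.one_ne_top one_ne_zero hδ'0
  obtain ⟨m₀, hm₀⟩ := lt_iSup_iff.mp hlt
  refine ⟨m₀, fun m hm => ?_⟩
  have hBm : 1 - δ' ≤ P (B m) := by
    refine le_of_lt (hm₀.trans_le (measure_mono ?_))
    intro x hx
    simp only [hSdef, Set.mem_iInter] at hx
    exact hx m hm
  have hbound : ∀ ω ∈ B m, ∀ t, (∀ i, |u t i| ≤ K) →
      frobeniusNorm (LVu t - Ltu m ω t) ≤ ε := by
    intro ω hω t hut
    have heq : LVu t - Ltu m ω t = (LV 0 - Lt 0 m ω) +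
        ∑ i : Fin nc, u t i • ((LV i.succ - Lt i.succ m ω) - (LV 0 - Lt 0 m ω)) := by
      rw [hLVu, hLtu]
      simp only [smul_sub, Finset.sum_sub_distrib]
      abel
    rw [heq]
    have hb := frob_comb_bound (fun j => LV j - Lt j m ω) (u t) ε' K' hK'0
      (fun j => (hω j).2) (fun i => (hut i).trans (le_max_left _ _))
    calc frobeniusNorm ((LV 0 - Lt 0 m ω) +
        ∑ i : Fin nc, u t i • ((LV i.succ - Lt i.succ m ω) - (LV 0 - Lt 0 m ω)))
        ≤ ε' * (1 + 2 * nc * K') := hb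
      _ = ε := div_mul_cancel₀ ε hden.ne'
  have htoReal : ∀ W : Set Ω, B m ⊆ W → 1 - δ ≤ (P W).toReal := by
    intro W hW
    have h1 : 1 - δ' ≤ P W := hBm.trans (measure_mono hW)
    have h2 : ENNReal.ofReal (1 - δ) ≤ P W := by
      rw [ENNReal.ofReal_sub _ hδ.1.le, ENNReal.ofReal_one]; exact h1
    exact (ENNReal.ofReal_le_iff_le_toReal (measure_ne_top P W)).mp h2
  constructor
  · refine htoReal _ fun ω hω => ⟨fun i => (hω i).1, ?_⟩
    filter_upwards [hK] with t hut
    exact hbound ω hω t hut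
  · filter_upwards [hK] with t hut
    exact htoReal _ fun ω hω => hbound ω hω t hut
end

section
/- For every ε > 0, δ ∈ (0,1), T > 0, initial coefficient vector z⁰ ∈ ℝ^N, and measurable essentially bounded control u : [0,T] → ℝ^{n_c}, there exists m₀ ∈ ℕ such that for every m ≥ m₀: if z : [0,T] → ℝ^N is the continuous solution of z(t) = z⁰ + ∫₀ᵗ L_V^u(s) z(s) ds, and if for each ω in the event on which all empirical mass matrices are invertible z̃(·,ω) : [0,T] → ℝ^N is a continuous solution of z̃(t,ω) = z⁰ + ∫₀ᵗ L̃_m^u(s,ω) z̃(s,ω) ds, then for every t ∈ [0,T] one has ℙ(‖z(t) − z̃(t,·)‖₂ ≤ ε) ≥ 1 − δ. -/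
open MeasureTheory ProbabilityTheory


open MeasureTheory ProbabilityTheory Set Filter Real intervalIntegral Topology ENNReal
open scoped Interval Function

section AuxEDMD

instance matMeasAux (N : ℕ) : MeasurableSpace (Matrix (Fin N) (Fin N) ℝ) :=
  (inferInstance : MeasurableSpace (Fin N → Fin N → ℝ))

instance matBorelAux (N : ℕ) : BorelSpace (Matrix (Fin N) (Fin N) ℝ) :=
  (inferInstance : BorelSpace (Fin N → Fin N → ℝ))

instance matSecondAux (N : ℕ) : SecondCountableTopology (Matrix (Fin N) (Fin N) ℝ) :=
  (inferInstance : SecondCountableTopology (Fin N → Fin N → ℝ))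

noncomputable def clmN (N : ℕ) : Matrix (Fin N) (Fin N) ℝ →ₗ[ℝ]
    (EuclideanSpace ℝ (Fin N) →L[ℝ] EuclideanSpace ℝ (Fin N)) where
  toFun M := Matrix.toEuclideanCLM (𝕜 := ℝ) M
  map_add' A B := by simp
  map_smul' c A := by simp

lemma clmN_apply {N : ℕ} (M : Matrix (Fin N) (Fin N) ℝ) :
    clmN N M = Matrix.toEuclideanCLM (𝕜 := ℝ) M := rfl

lemma clmN_cont {N : ℕ} : Continuous (clmN N) := (clmN N).continuous_of_finiteDimensional

lemma matrix_inv_measurable (N : ℕ) :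
    Measurable (fun M : Matrix (Fin N) (Fin N) ℝ => M⁻¹) := by
  have h : (fun M : Matrix (Fin N) (Fin N) ℝ => M⁻¹)
      = fun M => (M.det)⁻¹ • M.adjugate := by
    funext M
    rw [Matrix.inv_def, Ring.inverse_eq_inv']
  rw [h]
  exact ((continuous_id.matrix_det).measurable.inv).smul
    (continuous_id.matrix_adjugate).measurable

end AuxEDMD

lemma gronwall_integral_aux {T c K a : ℝ} (hc : 0 ≤ c) (hK : 0 ≤ K) (ha : 0 ≤ a)
    (w : ℝ → ℝ) (hw : Continuous w) (hw0 : ∀ s, 0 ≤ w s)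
    (hineq : ∀ t ∈ Set.Icc (0:ℝ) T, w t ≤ c + ∫ s in (0:ℝ)..t, (K * w s + a)) :
    ∀ t ∈ Set.Icc (0:ℝ) T, w t ≤ gronwallBound c K a t := by
  set φ : ℝ → ℝ := fun t => c + ∫ s in (0:ℝ)..t, (K * w s + a) with hφdef
  have hint : Continuous fun s => K * w s + a := by continuity
  have hder : ∀ x : ℝ, HasDerivAt φ (K * w x + a) x := fun x =>
    ((hint.integral_hasStrictDerivAt 0 x).hasDerivAt).const_add c
  have key := norm_le_gronwallBound_of_norm_deriv_right_le (f := φ)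
      (f' := fun x => K * w x + a) (a := 0) (b := T) (δ := c) (K := K) (ε := a)
      (fun x _ => (hder x).continuousAt.continuousWithinAt)
      (fun x _ => (hder x).hasDerivWithinAt)
      (by simp [hφdef, abs_of_nonneg hc])
      ?_
  · intro t ht
    have h2 := key t ht
    rw [sub_zero] at h2
    exact le_trans (hineq t ht) (le_trans (le_abs_self _) h2)
  · intro x hx
    have hwφ : w x ≤ φ x := hineq x ⟨hx.1, hx.2.le⟩
    have h0 : 0 ≤ K * w x + a := add_nonneg (mul_nonneg hK (hw0 x)) ha
    rw [Real.norm_eq_abs, abs_of_nonneg h0, Real.norm_eq_abs]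
    have : φ x ≤ |φ x| := le_abs_self _
    nlinarith [mul_le_mul_of_nonneg_left hwφ hK, mul_le_mul_of_nonneg_left this hK]

lemma slln_aux {E : Type*} [MeasurableSpace E] {Ω : Type*} [MeasurableSpace Ω]
    (P : Measure Ω) [IsProbabilityMeasure P] (μ : Measure E)
    (Xs : ℕ → Ω → E) (hmeas : ∀ r, Measurable (Xs r))
    (hindep : iIndepFun Xs P)
    (hdist : ∀ r, P.map (Xs r) = μ)
    (φ : E → ℝ) (hφ : Measurable φ) (hφint : Integrable φ μ) :
    ∀ᵐ ω ∂P, Filter.Tendsto (fun m : ℕ => (1 / m : ℝ) * ∑ r ∈ Finset.range m, φ (Xs r ω))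
      Filter.atTop (nhds (∫ y, φ y ∂μ)) := by
  have hint : Integrable (fun ω => φ (Xs 0 ω)) P := by
    have := hφint
    rw [← hdist 0] at this
    exact (integrable_map_measure hφ.aestronglyMeasurable (hmeas 0).aemeasurable).mp this
  have hindep' : Pairwise ((IndepFun · · P) on fun r ω => φ (Xs r ω)) := fun i j hij =>
    (hindep.indepFun hij).comp hφ hφ
  have hident : ∀ r, IdentDistrib (fun ω => φ (Xs r ω)) (fun ω => φ (Xs 0 ω)) P P := fun r =>
    IdentDistrib.comp ⟨(hmeas r).aemeasurable, (hmeas 0).aemeasurable,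
      by rw [hdist r, hdist 0]⟩ hφ
  have h := strong_law_ae_real (fun r ω => φ (Xs r ω)) hint hindep' hident
  have hE : ∫ ω, φ (Xs 0 ω) ∂P = ∫ y, φ y ∂μ := by
    rw [← hdist 0, integral_map (hmeas 0).aemeasurable hφ.aestronglyMeasurable]
  filter_upwards [h] with ω hω
  rw [hE] at hω
  convert hω using 2 with m
  rw [one_div, div_eq_inv_mul]
lemma eDMD_det_aux {N : ℕ} {T Ka Kb dA : ℝ} (hT : 0 < T)
    (hKa : 0 ≤ Ka) (hKb : 0 ≤ Kb) (hdA : 0 ≤ dA)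
    {Au Bu : ℝ → (EuclideanSpace ℝ (Fin N) →L[ℝ] EuclideanSpace ℝ (Fin N))}
    (hAmeas : AEStronglyMeasurable Au (volume.restrict (Set.Icc (0:ℝ) T)))
    (hBmeas : AEStronglyMeasurable Bu (volume.restrict (Set.Icc (0:ℝ) T)))
    (hAb : ∀ᵐ s ∂(volume.restrict (Set.Icc (0:ℝ) T)), ‖Au s‖ ≤ Ka)
    (hBb : ∀ᵐ s ∂(volume.restrict (Set.Icc (0:ℝ) T)), ‖Bu s‖ ≤ Kb)
    (hABb : ∀ᵐ s ∂(volume.restrict (Set.Icc (0:ℝ) T)), ‖Au s - Bu s‖ ≤ dA)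
    {z0 : EuclideanSpace ℝ (Fin N)} {z zt : ℝ → EuclideanSpace ℝ (Fin N)}
    (hz : ContinuousOn z (Set.Icc 0 T))
    (hzeq : ∀ t ∈ Set.Icc (0:ℝ) T, z t = z0 + ∫ s in (0:ℝ)..t, Au s (z s))
    (hzt : ContinuousOn zt (Set.Icc 0 T))
    (hzteq : ∀ t ∈ Set.Icc (0:ℝ) T, zt t = z0 + ∫ s in (0:ℝ)..t, Bu s (zt s)) :
    ∀ t ∈ Set.Icc (0:ℝ) T,
      ‖z t - zt t‖ ≤ gronwallBound 0 (Kb + 1)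
        (dA * (‖z0‖ * Real.exp ((Ka + 1) * T))) t := by
  have hT' : (0:ℝ) ≤ T := hT.le
  -- projection onto [0,T]
  set proj : ℝ → ℝ := fun s => max 0 (min s T) with hproj
  have hprojc : Continuous proj := continuous_const.max (continuous_id.min continuous_const)
  have hprojmem : ∀ s, proj s ∈ Set.Icc (0:ℝ) T := fun s =>
    ⟨le_max_left _ _, max_le (by exact hT') (min_le_right _ _)⟩
  have hprojeq : ∀ s ∈ Set.Icc (0:ℝ) T, proj s = s := fun s hs => by
    simp only [hproj, min_eq_left hs.2, max_eq_right hs.1]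
  set z' : ℝ → EuclideanSpace ℝ (Fin N) := fun s => z (proj s) with hz'
  set zt' : ℝ → EuclideanSpace ℝ (Fin N) := fun s => zt (proj s) with hzt'
  have hz'c : Continuous z' := hz.comp_continuous hprojc hprojmem
  have hzt'c : Continuous zt' := hzt.comp_continuous hprojc hprojmem
  have hz'eq : ∀ s ∈ Set.Icc (0:ℝ) T, z' s = z s := fun s hs => by
    show z (proj s) = z s; rw [hprojeq s hs]
  have hzt'eq : ∀ s ∈ Set.Icc (0:ℝ) T, zt' s = zt s := fun s hs => by
    show zt (proj s) = zt s; rw [hprojeq s hs]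
  -- global bounds on z', zt'
  obtain ⟨M1, hM1⟩ := isCompact_Icc.exists_bound_of_continuousOn hz
  obtain ⟨M2, hM2⟩ := isCompact_Icc.exists_bound_of_continuousOn hzt
  have hM1' : ∀ s, ‖z' s‖ ≤ M1 := fun s => hM1 _ (hprojmem s)
  have hM2' : ∀ s, ‖zt' s‖ ≤ M2 := fun s => hM2 _ (hprojmem s)
  -- restriction of a.e. facts to subintervals
  have hsub : ∀ t ∈ Set.Icc (0:ℝ) T, Ι (0:ℝ) t ⊆ Set.Icc (0:ℝ) T := fun t ht => by
    rw [Set.uIoc_of_le ht.1]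
    exact fun x hx => ⟨hx.1.le, hx.2.trans ht.2⟩
  have hae : ∀ t ∈ Set.Icc (0:ℝ) T,
      ∀ᵐ s ∂(volume.restrict (Ι (0:ℝ) t)),
        (‖Au s‖ ≤ Ka ∧ ‖Bu s‖ ≤ Kb ∧ ‖Au s - Bu s‖ ≤ dA) ∧ s ∈ Set.Icc (0:ℝ) T := by
    intro t ht
    have h1 : ∀ᵐ s ∂(volume.restrict (Ι (0:ℝ) t)),
        ‖Au s‖ ≤ Ka ∧ ‖Bu s‖ ≤ Kb ∧ ‖Au s - Bu s‖ ≤ dA :=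
      ae_mono (Measure.restrict_mono (hsub t ht) le_rfl) ((hAb.and hBb).and hABb |>.mono
        (fun s hs => ⟨hs.1.1, hs.1.2, hs.2⟩))
    have h2 : ∀ᵐ s ∂(volume.restrict (Ι (0:ℝ) t)), s ∈ Ι (0:ℝ) t :=
      ae_restrict_mem measurableSet_uIoc
    filter_upwards [h1, h2] with s hs1 hs2
    exact ⟨hs1, hsub t ht hs2⟩
  -- integrands with primed functions
  have hevalc : Continuous fun p : ((EuclideanSpace ℝ (Fin N) →L[ℝ] EuclideanSpace ℝ (Fin N))
      × EuclideanSpace ℝ (Fin N)) => p.1 p.2 := isBoundedBilinearMap_apply.continuous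
  have hmeasA : ∀ (y : ℝ → EuclideanSpace ℝ (Fin N)), Continuous y →
      ∀ t ∈ Set.Icc (0:ℝ) T, AEStronglyMeasurable (fun s => Au s (y s))
        (volume.restrict (Ι (0:ℝ) t)) := by
    intro y hy t ht
    have : AEStronglyMeasurable Au (volume.restrict (Ι (0:ℝ) t)) :=
      hAmeas.mono_measure (Measure.restrict_mono (hsub t ht) le_rfl)
    exact hevalc.comp_aestronglyMeasurable (this.prodMk hy.aestronglyMeasurable)
  have hmeasB : ∀ (y : ℝ → EuclideanSpace ℝ (Fin N)), Continuous y →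
      ∀ t ∈ Set.Icc (0:ℝ) T, AEStronglyMeasurable (fun s => Bu s (y s))
        (volume.restrict (Ι (0:ℝ) t)) := by
    intro y hy t ht
    have : AEStronglyMeasurable Bu (volume.restrict (Ι (0:ℝ) t)) :=
      hBmeas.mono_measure (Measure.restrict_mono (hsub t ht) le_rfl)
    exact hevalc.comp_aestronglyMeasurable (this.prodMk hy.aestronglyMeasurable)
  -- interval integrability
  have hintA : ∀ t ∈ Set.Icc (0:ℝ) T, IntervalIntegrable (fun s => Au s (z' s)) volume 0 t := by
    intro t ht
    rw [intervalIntegrable_iff_integrableOn_Ioc_of_le ht.1]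
    have hmA := hmeasA z' hz'c t ht
    rw [Set.uIoc_of_le ht.1] at hmA
    refine Integrable.mono' (integrable_const (Ka * M1)) hmA ?_
    rw [← Set.uIoc_of_le ht.1]
    filter_upwards [hae t ht] with s hs
    calc ‖Au s (z' s)‖ ≤ ‖Au s‖ * ‖z' s‖ := (Au s).le_opNorm _
    _ ≤ Ka * M1 := mul_le_mul hs.1.1 (hM1' s) (norm_nonneg _) hKa
  have hintB : ∀ t ∈ Set.Icc (0:ℝ) T, IntervalIntegrable (fun s => Bu s (zt' s)) volume 0 t := by
    intro t ht
    rw [intervalIntegrable_iff_integrableOn_Ioc_of_le ht.1]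
    have hmB := hmeasB zt' hzt'c t ht
    rw [Set.uIoc_of_le ht.1] at hmB
    refine Integrable.mono' (integrable_const (Kb * M2)) hmB ?_
    rw [← Set.uIoc_of_le ht.1]
    filter_upwards [hae t ht] with s hs
    calc ‖Bu s (zt' s)‖ ≤ ‖Bu s‖ * ‖zt' s‖ := (Bu s).le_opNorm _
    _ ≤ Kb * M2 := mul_le_mul hs.1.2.1 (hM2' s) (norm_nonneg _) hKb
  -- rewrite the integral equations with primed functions
  have hzeq' : ∀ t ∈ Set.Icc (0:ℝ) T, z t = z0 + ∫ s in (0:ℝ)..t, Au s (z' s) := by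
    intro t ht
    rw [hzeq t ht]
    congr 1
    refine intervalIntegral.integral_congr (fun s hs => ?_)
    rw [Set.uIcc_of_le ht.1] at hs
    rw [hz'eq s ⟨hs.1, hs.2.trans ht.2⟩]
  have hzteq' : ∀ t ∈ Set.Icc (0:ℝ) T, zt t = z0 + ∫ s in (0:ℝ)..t, Bu s (zt' s) := by
    intro t ht
    rw [hzteq t ht]
    congr 1
    refine intervalIntegral.integral_congr (fun s hs => ?_)
    rw [Set.uIcc_of_le ht.1] at hs
    rw [hzt'eq s ⟨hs.1, hs.2.trans ht.2⟩]
  -- Step 1: a priori bound on ‖z‖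
  set M : ℝ := ‖z0‖ * Real.exp ((Ka + 1) * T) with hM
  have hzbound : ∀ s ∈ Set.Icc (0:ℝ) T, ‖z s‖ ≤ M := by
    have hineq1 : ∀ t ∈ Set.Icc (0:ℝ) T,
        (fun s => ‖z' s‖) t ≤ ‖z0‖ + ∫ s in (0:ℝ)..t, ((Ka + 1) * ‖z' s‖ + 0) := by
      intro t ht
      show ‖z' t‖ ≤ ‖z0‖ + ∫ s in (0:ℝ)..t, ((Ka + 1) * ‖z' s‖ + 0)
      rw [hz'eq t ht, hzeq' t ht]
      have h1 : ‖z0 + ∫ s in (0:ℝ)..t, Au s (z' s)‖ ≤ ‖z0‖ + ‖∫ s in (0:ℝ)..t, Au s (z' s)‖ :=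
        norm_add_le _ _
      refine h1.trans (add_le_add_right ?_ _)
      have h2 : ‖∫ s in (0:ℝ)..t, Au s (z' s)‖ ≤ |∫ s in (0:ℝ)..t, ((Ka + 1) * ‖z' s‖ + 0)| := by
        refine intervalIntegral.norm_integral_le_abs_of_norm_le ?_ ?_
        · filter_upwards [hae t ht] with s hs
          calc ‖Au s (z' s)‖ ≤ ‖Au s‖ * ‖z' s‖ := (Au s).le_opNorm _
          _ ≤ (Ka + 1) * ‖z' s‖ + 0 := by
              have := hs.1.1
              nlinarith [norm_nonneg (z' s), norm_nonneg (Au s)]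
        · exact (Continuous.intervalIntegrable ((continuous_const.mul hz'c.norm).add continuous_const) _ _)
      refine h2.trans (le_of_eq (abs_of_nonneg ?_))
      apply intervalIntegral.integral_nonneg ht.1
      intro s _
      positivity
    have key := gronwall_integral_aux (K := Ka + 1) (a := 0) (norm_nonneg z0)
        (by linarith) le_rfl (fun s => ‖z' s‖) hz'c.norm (fun s => norm_nonneg _) hineq1
    intro s hs
    have hks := key s hs
    rw [hz'eq s hs] at hks
    refine hks.trans ?_
    rw [gronwallBound_ε0]
    have h1 : (Ka + 1) * s ≤ (Ka + 1) * T := by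
      have := hs.2; nlinarith [hs.1]
    exact mul_le_mul_of_nonneg_left (Real.exp_le_exp.mpr h1) (norm_nonneg _)
  -- Step 2: difference estimate
  have hM0 : 0 ≤ M := mul_nonneg (norm_nonneg _) (Real.exp_pos _).le
  have hineq2 : ∀ s ∈ Set.Icc (0:ℝ) T,
      (fun r => ‖z' r - zt' r‖) s ≤ 0 + ∫ r in (0:ℝ)..s, ((Kb + 1) * ‖z' r - zt' r‖ + dA * M) := by
    intro s hs
    show ‖z' s - zt' s‖ ≤ 0 + ∫ r in (0:ℝ)..s, ((Kb + 1) * ‖z' r - zt' r‖ + dA * M)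
    have hdiff : z' s - zt' s =
        ∫ r in (0:ℝ)..s, (Au r (z' r) - Bu r (zt' r)) := by
      rw [hz'eq s hs, hzt'eq s hs, hzeq' s hs, hzteq' s hs,
        intervalIntegral.integral_sub (hintA s hs) (hintB s hs)]
      abel
    rw [hdiff]
    have h2 : ‖∫ r in (0:ℝ)..s, (Au r (z' r) - Bu r (zt' r))‖ ≤
        |∫ r in (0:ℝ)..s, ((Kb + 1) * ‖z' r - zt' r‖ + dA * M)| := by
      refine intervalIntegral.norm_integral_le_abs_of_norm_le ?_ ?_
      · filter_upwards [hae s hs] with r hr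
        have hrI : r ∈ Set.Icc (0:ℝ) T := hr.2
        have hzM : ‖z' r‖ ≤ M := by rw [hz'eq r hrI]; exact hzbound r hrI
        have hsplit : Au r (z' r) - Bu r (zt' r) =
            (Au r - Bu r) (z' r) + (Bu r) (z' r - zt' r) := by
          simp only [ContinuousLinearMap.sub_apply, map_sub]
          abel
        rw [hsplit]
        have hb1 : ‖(Au r - Bu r) (z' r)‖ ≤ dA * M :=
          ((Au r - Bu r).le_opNorm _).trans
            (mul_le_mul hr.1.2.2 hzM (norm_nonneg _) hdA)
        have hb2 : ‖(Bu r) (z' r - zt' r)‖ ≤ Kb * ‖z' r - zt' r‖ :=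
          ((Bu r).le_opNorm _).trans
            (mul_le_mul_of_nonneg_right hr.1.2.1 (norm_nonneg _))
        calc ‖(Au r - Bu r) (z' r) + (Bu r) (z' r - zt' r)‖
            ≤ ‖(Au r - Bu r) (z' r)‖ + ‖(Bu r) (z' r - zt' r)‖ := norm_add_le _ _
        _ ≤ (Kb + 1) * ‖z' r - zt' r‖ + dA * M := by
            nlinarith [norm_nonneg (z' r - zt' r)]
      · exact (Continuous.intervalIntegrable
          ((continuous_const.mul (hz'c.sub hzt'c).norm).add continuous_const) _ _)
    rw [zero_add]
    refine h2.trans (le_of_eq (abs_of_nonneg ?_))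
    apply intervalIntegral.integral_nonneg hs.1
    intro r _
    have : 0 ≤ (Kb + 1) * ‖z' r - zt' r‖ := by positivity
    nlinarith [mul_nonneg hdA hM0]
  have key := gronwall_integral_aux (K := Kb + 1) (a := dA * M) le_rfl (by linarith)
      (mul_nonneg hdA hM0) (fun s => ‖z' s - zt' s‖) (hz'c.sub hzt'c).norm
      (fun s => norm_nonneg _) hineq2
  intro t ht
  have hkt := key t ht
  rw [← hz'eq t ht, ← hzt'eq t ht]
  exact hkt

set_option maxHeartbeats 1600000 in
/-- finite-data probabilistic error bound on the trajectories of
observables propagated by the projected bilinear generator `L_V^u` versus its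
purely data-driven eDMD estimate `L̃_m^u`: for every `ε > 0`, `δ ∈ (0,1)`, horizon
`T > 0`, initial coefficient vector `z⁰` and measurable essentially bounded control
`u`, there is `m₀` such that for all `m ≥ m₀` and each `t ∈ [0,T]`,
`ℙ(‖z(t) − z̃(t,·)‖₂ ≤ ε) ≥ 1 − δ`. -/
theorem eDMD_trajectory_error_bound {d N nc : ℕ}
    (X : Set (EuclideanSpace ℝ (Fin d))) (hXcpt : IsCompact X)
    (hXpos : 0 < volume X)
    (μ : Measure (EuclideanSpace ℝ (Fin d)))
    (hμ : μ = (volume X)⁻¹ • volume.restrict X)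
    (ψ : Fin N → EuclideanSpace ℝ (Fin d) → ℝ)
    (hψ : ∀ j, ContDiff ℝ 1 (ψ j))
    (C : Matrix (Fin N) (Fin N) ℝ)
    (hC : ∀ k l, C k l = ∫ y, ψ k y * ψ l y ∂μ)
    (hCinv : IsUnit C.det)
    (f : EuclideanSpace ℝ (Fin d) → EuclideanSpace ℝ (Fin d)) (hf : Continuous f)
    (g : Fin nc → EuclideanSpace ℝ (Fin d) → EuclideanSpace ℝ (Fin d))
    (hg : ∀ i, Continuous (g i))
    (F : Fin (nc + 1) → EuclideanSpace ℝ (Fin d) → EuclideanSpace ℝ (Fin d))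
    (hF0 : F 0 = f) (hFsucc : ∀ i : Fin nc, F i.succ = fun y => f y + g i y)
    (LF : Fin (nc + 1) → Fin N → EuclideanSpace ℝ (Fin d) → ℝ)
    (hLF : ∀ i l y, LF i l y = fderiv ℝ (ψ l) y (F i y))
    (A : Fin (nc + 1) → Matrix (Fin N) (Fin N) ℝ)
    (hA : ∀ i k l, A i k l = ∫ y, ψ k y * LF i l y ∂μ)
    (LV : Fin (nc + 1) → Matrix (Fin N) (Fin N) ℝ)
    (hLV : ∀ i, LV i = C⁻¹ * A i)
    {Ω : Type*} [MeasurableSpace Ω] (P : Measure Ω) [IsProbabilityMeasure P]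
    (Xs : Fin (nc + 1) → ℕ → Ω → EuclideanSpace ℝ (Fin d))
    (hXmeas : ∀ i r, Measurable (Xs i r))
    (hXindep : ∀ i, iIndepFun (Xs i) P)
    (hXdist : ∀ i r, P.map (Xs i r) = μ)
    (Ct : Fin (nc + 1) → ℕ → Ω → Matrix (Fin N) (Fin N) ℝ)
    (hCt : ∀ i m ω k l,
      Ct i m ω k l = (1 / m : ℝ) * ∑ r ∈ Finset.range m, ψ k (Xs i r ω) * ψ l (Xs i r ω))
    (At : Fin (nc + 1) → ℕ → Ω → Matrix (Fin N) (Fin N) ℝ)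
    (hAt : ∀ i m ω k l,
      At i m ω k l = (1 / m : ℝ) * ∑ r ∈ Finset.range m, ψ k (Xs i r ω) * LF i l (Xs i r ω))
    (Lt : Fin (nc + 1) → ℕ → Ω → Matrix (Fin N) (Fin N) ℝ)
    (hLt : ∀ i m ω, Lt i m ω = (Ct i m ω)⁻¹ * At i m ω)
    (T : ℝ) (hT : 0 < T)
    (u : ℝ → Fin nc → ℝ) (hu : Measurable u)
    (hubdd : ∃ K : ℝ, ∀ᵐ t ∂(volume.restrict (Set.Icc (0 : ℝ) T)), ∀ i, |u t i| ≤ K)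
    (LVu : ℝ → Matrix (Fin N) (Fin N) ℝ)
    (hLVu : ∀ t, LVu t = LV 0 + ∑ i : Fin nc, u t i • (LV i.succ - LV 0))
    (Ltu : ℕ → Ω → ℝ → Matrix (Fin N) (Fin N) ℝ)
    (hLtu : ∀ m ω t,
      Ltu m ω t = Lt 0 m ω + ∑ i : Fin nc, u t i • (Lt i.succ m ω - Lt 0 m ω))
    (z0 : EuclideanSpace ℝ (Fin N))
    (ε δ : ℝ) (hε : 0 < ε) (hδ : δ ∈ Set.Ioo (0 : ℝ) 1) :
    ∃ m₀ : ℕ, ∀ m ≥ m₀,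
      ∀ z : ℝ → EuclideanSpace ℝ (Fin N),
        ContinuousOn z (Set.Icc 0 T) →
        (∀ t ∈ Set.Icc (0 : ℝ) T,
          z t = z0 + ∫ s in (0 : ℝ)..t, Matrix.toEuclideanCLM (𝕜 := ℝ) (LVu s) (z s)) →
      ∀ zt : Ω → ℝ → EuclideanSpace ℝ (Fin N),
        (∀ ω, (∀ i, IsUnit (Ct i m ω).det) →
          ContinuousOn (zt ω) (Set.Icc 0 T) ∧
          (∀ t ∈ Set.Icc (0 : ℝ) T,
            zt ω t = z0 +
              ∫ s in (0 : ℝ)..t, Matrix.toEuclideanCLM (𝕜 := ℝ) (Ltu m ω s) (zt ω s))) →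
      ∀ t ∈ Set.Icc (0 : ℝ) T,
        1 - δ ≤ (P {ω | ‖z t - zt ω t‖ ≤ ε}).toReal := by
  classical
  have hμprob : IsProbabilityMeasure μ := by
    rw [← hXdist 0 0]
    exact Measure.isProbabilityMeasure_map (hXmeas 0 0).aemeasurable
  have hψc : ∀ k, Continuous (ψ k) := fun k => (hψ k).continuous
  have hFc : ∀ i, Continuous (F i) := by
    intro i
    refine Fin.cases ?_ ?_ i
    · rw [hF0]; exact hf
    · intro j; rw [hFsucc j]; exact hf.add (hg j)
  have hLFc : ∀ i l, Continuous (LF i l) := by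
    intro i l
    have h1 : Continuous fun y => (fderiv ℝ (ψ l) y, F i y) :=
      ((hψ l).continuous_fderiv one_ne_zero).prodMk (hFc i)
    have h2 := isBoundedBilinearMap_apply.continuous.comp h1
    have h3 : (fun y => fderiv ℝ (ψ l) y (F i y)) = LF i l := by
      funext y; rw [hLF]
    rw [← h3]; exact h2
  have hInt : ∀ φ : EuclideanSpace ℝ (Fin d) → ℝ, Continuous φ → Integrable φ μ := by
    intro φ hφ
    rw [hμ]
    exact ((hφ.continuousOn).integrableOn_compact hXcpt).smul_measure
      (ENNReal.inv_ne_top.mpr hXpos.ne')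
  -- strong law for the entries of the empirical matrices
  have hCkey : ∀ (i : Fin (nc + 1)) (k l : Fin N), ∀ᵐ ω ∂P,
      Tendsto (fun m : ℕ => Ct i m ω k l) atTop (𝓝 (C k l)) := by
    intro i k l
    have hφc : Continuous fun y => ψ k y * ψ l y := (hψc k).mul (hψc l)
    have h := slln_aux P μ (Xs i) (hXmeas i) (hXindep i) (hXdist i) _
      hφc.measurable (hInt _ hφc)
    filter_upwards [h] with ω hω
    have heq : (fun m : ℕ => Ct i m ω k l)
        = fun m : ℕ => (1 / m : ℝ) * ∑ r ∈ Finset.range m, ψ k (Xs i r ω) * ψ l (Xs i r ω) :=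
      funext fun m => hCt i m ω k l
    rw [heq, hC]
    exact hω
  have hAkey : ∀ (i : Fin (nc + 1)) (k l : Fin N), ∀ᵐ ω ∂P,
      Tendsto (fun m : ℕ => At i m ω k l) atTop (𝓝 (A i k l)) := by
    intro i k l
    have hφc : Continuous fun y => ψ k y * LF i l y := (hψc k).mul (hLFc i l)
    have h := slln_aux P μ (Xs i) (hXmeas i) (hXindep i) (hXdist i) _
      hφc.measurable (hInt _ hφc)
    filter_upwards [h] with ω hω
    have heq : (fun m : ℕ => At i m ω k l)
        = fun m : ℕ => (1 / m : ℝ) * ∑ r ∈ Finset.range m, ψ k (Xs i r ω) * LF i l (Xs i r ω) :=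
      funext fun m => hAt i m ω k l
    rw [heq, hA]
    exact hω
  have hCae : ∀ᵐ ω ∂P, ∀ (i : Fin (nc + 1)) (k l : Fin N),
      Tendsto (fun m : ℕ => Ct i m ω k l) atTop (𝓝 (C k l)) :=
    ae_all_iff.2 fun i => ae_all_iff.2 fun k => ae_all_iff.2 fun l => hCkey i k l
  have hAae : ∀ᵐ ω ∂P, ∀ (i : Fin (nc + 1)) (k l : Fin N),
      Tendsto (fun m : ℕ => At i m ω k l) atTop (𝓝 (A i k l)) :=
    ae_all_iff.2 fun i => ae_all_iff.2 fun k => ae_all_iff.2 fun l => hAkey i k l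
  have hdetC : C.det ≠ 0 := by
    simpa [isUnit_iff_ne_zero] using hCinv
  -- constants
  obtain ⟨K0, hK0⟩ := hubdd
  set K : ℝ := max K0 0 with hKdef
  have hKnn : 0 ≤ K := le_max_right _ _
  have hKbd : ∀ᵐ t ∂(volume.restrict (Set.Icc (0 : ℝ) T)), ∀ i, |u t i| ≤ K :=
    hK0.mono fun t h i => (h i).trans (le_max_left _ _)
  set B : Fin (nc + 1) → (EuclideanSpace ℝ (Fin N) →L[ℝ] EuclideanSpace ℝ (Fin N)) :=
    fun i => Matrix.toEuclideanCLM (𝕜 := ℝ) (LV i) with hBdef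
  set K₁ : ℝ := ‖B 0‖ + ∑ _i : Fin nc, K * ‖B _i.succ - B 0‖ with hK₁def
  have hK₁nn : 0 ≤ K₁ := by
    apply add_nonneg (norm_nonneg _)
    exact Finset.sum_nonneg fun i _ => mul_nonneg hKnn (norm_nonneg _)
  set c₁ : ℝ := 1 + ∑ _i : Fin nc, 2 * K with hc₁def
  have hc₁1 : 1 ≤ c₁ := by
    have : 0 ≤ ∑ _i : Fin nc, 2 * K := Finset.sum_nonneg fun i _ => by linarith
    simp only [hc₁def]; linarith
  have hc₁nn : 0 ≤ c₁ := by linarith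
  set Kb : ℝ := K₁ + c₁ with hKbdef
  have hKbnn : 0 ≤ Kb := by linarith
  set K₂ : ℝ := Kb + 1 with hK₂def
  have hK₂pos : 0 < K₂ := by linarith
  set M : ℝ := ‖z0‖ * Real.exp ((K₁ + 1) * T) with hMdef
  have hMnn : 0 ≤ M := mul_nonneg (norm_nonneg _) (Real.exp_pos _).le
  set η : ℝ := min 1 (ε * K₂ / ((c₁ * M + 1) * Real.exp (K₂ * T))) with hηdef
  have hηpos : 0 < η := by
    apply lt_min one_pos
    apply div_pos (mul_pos hε hK₂pos)
    apply mul_pos _ (Real.exp_pos _)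
    nlinarith [mul_nonneg hc₁nn hMnn]
  have hη1 : η ≤ 1 := min_le_left _ _
  -- measurability of the empirical matrices
  have hCtmeas : ∀ (i : Fin (nc + 1)) (m : ℕ), Measurable (fun ω => Ct i m ω) := by
    intro i m
    refine measurable_pi_iff.mpr fun k => measurable_pi_iff.mpr fun l => ?_
    have heq : (fun ω => Ct i m ω k l)
        = fun ω => (1 / m : ℝ) * ∑ r ∈ Finset.range m, ψ k (Xs i r ω) * ψ l (Xs i r ω) :=
      funext fun ω => hCt i m ω k l
    rw [heq]
    exact measurable_const.mul (Finset.measurable_sum _ fun r _ =>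
      ((hψc k).measurable.comp (hXmeas i r)).mul ((hψc l).measurable.comp (hXmeas i r)))
  have hAtmeas : ∀ (i : Fin (nc + 1)) (m : ℕ), Measurable (fun ω => At i m ω) := by
    intro i m
    refine measurable_pi_iff.mpr fun k => measurable_pi_iff.mpr fun l => ?_
    have heq : (fun ω => At i m ω k l)
        = fun ω => (1 / m : ℝ) * ∑ r ∈ Finset.range m, ψ k (Xs i r ω) * LF i l (Xs i r ω) :=
      funext fun ω => hAt i m ω k l
    rw [heq]
    exact measurable_const.mul (Finset.measurable_sum _ fun r _ =>
      ((hψc k).measurable.comp (hXmeas i r)).mul ((hLFc i l).measurable.comp (hXmeas i r)))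
  have hmulc : Continuous fun p : (Matrix (Fin N) (Fin N) ℝ) × (Matrix (Fin N) (Fin N) ℝ) =>
      p.1 * p.2 := continuous_fst.matrix_mul continuous_snd
  have hLtmeas : ∀ (i : Fin (nc + 1)) (m : ℕ), Measurable (fun ω => Lt i m ω) := by
    intro i m
    have heq : (fun ω => Lt i m ω) = fun ω => (Ct i m ω)⁻¹ * At i m ω :=
      funext fun ω => hLt i m ω
    rw [heq]
    exact hmulc.measurable.comp
      (((matrix_inv_measurable N).comp (hCtmeas i m)).prodMk (hAtmeas i m))
  -- the good events
  set Bt : Fin (nc + 1) → ℕ → Ω → (EuclideanSpace ℝ (Fin N) →L[ℝ] EuclideanSpace ℝ (Fin N)) :=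
    fun i m ω => Matrix.toEuclideanCLM (𝕜 := ℝ) (Lt i m ω) with hBtdef
  set Egood : ℕ → Set Ω := fun m =>
    {ω | (∀ i, IsUnit (Ct i m ω).det) ∧ ∀ i, ‖Bt i m ω - B i‖ ≤ η} with hEdef
  have hEmeas : ∀ m, MeasurableSet (Egood m) := by
    intro m
    have h1 : ∀ i : Fin (nc + 1), MeasurableSet {ω | IsUnit (Ct i m ω).det} := by
      intro i
      have hmd : Measurable fun ω => (Ct i m ω).det :=
        (continuous_id.matrix_det).measurable.comp (hCtmeas i m)
      have heq : {ω | IsUnit (Ct i m ω).det}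
          = (fun ω => (Ct i m ω).det) ⁻¹' ({(0:ℝ)}ᶜ) := by
        ext ω; simp [isUnit_iff_ne_zero]
      rw [heq]
      exact hmd (measurableSet_singleton 0).compl
    have h2 : ∀ i : Fin (nc + 1), MeasurableSet {ω | ‖Bt i m ω - B i‖ ≤ η} := by
      intro i
      have hm1 : Measurable fun ω => ‖Bt i m ω - B i‖ :=
        ((continuous_norm.comp (clmN_cont.sub continuous_const)).measurable).comp
          (hLtmeas i m)
      exact measurableSet_le hm1 measurable_const
    have heq : Egood m = (⋂ i, {ω | IsUnit (Ct i m ω).det})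
        ∩ ⋂ i, {ω | ‖Bt i m ω - B i‖ ≤ η} := by
      ext ω
      simp only [hEdef, Set.mem_setOf_eq, Set.mem_inter_iff, Set.mem_iInter]
    rw [heq]
    exact (MeasurableSet.iInter h1).inter (MeasurableSet.iInter h2)
  -- a.s. eventually in the good event
  have hASgood : ∀ᵐ ω ∂P, ∀ᶠ m in atTop, ω ∈ Egood m := by
    filter_upwards [hCae, hAae] with ω hCω hAω
    have hCm : ∀ i, Tendsto (fun m => Ct i m ω) atTop (𝓝 C) := fun i => by
      refine tendsto_pi_nhds.2 fun k => ?_; refine tendsto_pi_nhds.2 fun l => ?_; exact hCω i k l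
    have hAm : ∀ i, Tendsto (fun m => At i m ω) atTop (𝓝 (A i)) := fun i => by
      refine tendsto_pi_nhds.2 fun k => ?_; refine tendsto_pi_nhds.2 fun l => ?_; exact hAω i k l
    have hdet : ∀ i, Tendsto (fun m => (Ct i m ω).det) atTop (𝓝 C.det) := fun i =>
      (continuous_id.matrix_det.tendsto C).comp (hCm i)
    have hev1 : ∀ᶠ m in atTop, ∀ i, IsUnit (Ct i m ω).det := by
      rw [eventually_all]
      intro i
      exact ((hdet i).eventually_ne hdetC).mono fun m hm => isUnit_iff_ne_zero.mpr hm
    have hinv : ∀ i, Tendsto (fun m => (Ct i m ω)⁻¹) atTop (𝓝 C⁻¹) := fun i => by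
      have hC1 : ContinuousAt Ring.inverse C.det := by
        rw [Ring.inverse_eq_inv']; exact continuousAt_inv₀ hdetC
      exact ((continuousAt_matrix_inv C hC1).tendsto).comp (hCm i)
    have hLtm : ∀ i, Tendsto (fun m => Lt i m ω) atTop (𝓝 (LV i)) := fun i => by
      have heq : (fun m => Lt i m ω) = fun m => (Ct i m ω)⁻¹ * At i m ω :=
        funext fun m => hLt i m ω
      rw [heq, hLV i]
      exact (hmulc.tendsto _).comp ((hinv i).prodMk_nhds (hAm i))
    have hnrm : ∀ i, Tendsto (fun m => ‖Bt i m ω - B i‖) atTop (𝓝 0) := fun i => by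
      have h1 : Tendsto (fun m => clmN N (Lt i m ω)) atTop (𝓝 (clmN N (LV i))) :=
        (clmN_cont.tendsto _).comp (hLtm i)
      have h2 := (h1.sub (tendsto_const_nhds (x := clmN N (LV i)))).norm
      rw [sub_self, norm_zero] at h2
      have hBtB : (fun m => ‖Bt i m ω - B i‖)
          = fun m => ‖clmN N (Lt i m ω) - clmN N (LV i)‖ := by
        funext m'
        simp only [hBtdef, hBdef, clmN_apply]
      rw [hBtB]
      exact h2
    have hev2 : ∀ᶠ m in atTop, ∀ i, ‖Bt i m ω - B i‖ ≤ η := by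
      rw [eventually_all]
      exact fun i => (hnrm i).eventually (eventually_le_nhds hηpos)
    filter_upwards [hev1, hev2] with m h1 h2
    exact ⟨h1, h2⟩
  -- choice of m₀
  set Abad : ℕ → Set Ω := fun n => ⋃ m, ⋃ (_ : n ≤ m), (Egood m)ᶜ with hAbaddef
  have hAbadmeas : ∀ n, MeasurableSet (Abad n) := fun n =>
    MeasurableSet.iUnion fun m => MeasurableSet.iUnion fun _ => (hEmeas m).compl
  have hAnti : Antitone Abad := by
    intro n n' hnn'
    refine Set.iUnion_subset fun m => Set.iUnion_subset fun hm => ?_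
    exact Set.subset_iUnion₂ (s := fun m _ => (Egood m)ᶜ) m (le_trans hnn' hm)
  have hInter0 : P (⋂ n, Abad n) = 0 := by
    refine measure_mono_null ?_ (ae_iff.mp hASgood)
    intro ω hω
    simp only [hAbaddef, Set.mem_iInter, Set.mem_iUnion, Set.mem_compl_iff] at hω
    simp only [Set.mem_setOf_eq, Filter.not_eventually]
    rw [Filter.frequently_atTop]
    intro n
    obtain ⟨m', hm1, hm2⟩ := hω n
    exact ⟨m', hm1, hm2⟩
  have htend : Tendsto (fun n => P (Abad n)) atTop (𝓝 0) := by
    have h := tendsto_measure_iInter_atTop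
      (fun n => (hAbadmeas n).nullMeasurableSet) hAnti ⟨0, measure_ne_top P _⟩
    rw [hInter0] at h
    exact h
  have hδ' : (0 : ℝ≥0∞) < ENNReal.ofReal δ := ENNReal.ofReal_pos.mpr hδ.1
  obtain ⟨m₀, hm₀⟩ : ∃ m₀, ∀ n ≥ m₀, P (Abad n) ≤ ENNReal.ofReal δ := by
    have := htend.eventually (eventually_le_nhds hδ')
    rwa [Filter.eventually_atTop] at this
  refine ⟨m₀, ?_⟩
  intro m hm z hzc hzeq zt hzt t ht
  -- the deterministic estimate on the good event
  have hsubE : Egood m ⊆ {ω | ‖z t - zt ω t‖ ≤ ε} := by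
    intro ω hω
    obtain ⟨hωdet, hωnrm⟩ := hω
    obtain ⟨hztc, hzteq⟩ := hzt ω hωdet
    -- generator processes
    set Au : ℝ → (EuclideanSpace ℝ (Fin N) →L[ℝ] EuclideanSpace ℝ (Fin N)) :=
      fun s => Matrix.toEuclideanCLM (𝕜 := ℝ) (LVu s) with hAudef
    set Bu : ℝ → (EuclideanSpace ℝ (Fin N) →L[ℝ] EuclideanSpace ℝ (Fin N)) :=
      fun s => Matrix.toEuclideanCLM (𝕜 := ℝ) (Ltu m ω s) with hBudef
    have hui : ∀ i : Fin nc, Measurable fun s => u s i := fun i =>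
      (measurable_pi_apply i).comp hu
    have hLVumeas : Measurable LVu := by
      have heq : LVu = fun s =>
          LV 0 + ∑ i : Fin nc, u s i • (LV i.succ - LV 0) := funext hLVu
      rw [heq]
      refine measurable_pi_iff.mpr fun k => measurable_pi_iff.mpr fun l => ?_
      simp only [Matrix.add_apply, Matrix.sum_apply, Matrix.smul_apply, smul_eq_mul]
      exact measurable_const.add (Finset.measurable_sum _ fun i _ =>
        (hui i).mul measurable_const)
    have hLtumeas : Measurable (Ltu m ω) := by
      have heq : Ltu m ω = fun s =>
          Lt 0 m ω + ∑ i : Fin nc, u s i • (Lt i.succ m ω - Lt 0 m ω) :=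
        funext fun s => hLtu m ω s
      rw [heq]
      refine measurable_pi_iff.mpr fun k => measurable_pi_iff.mpr fun l => ?_
      simp only [Matrix.add_apply, Matrix.sum_apply, Matrix.smul_apply, smul_eq_mul]
      exact measurable_const.add (Finset.measurable_sum _ fun i _ =>
        (hui i).mul measurable_const)
    have hAumeas : Measurable Au := clmN_cont.measurable.comp hLVumeas
    have hBumeas : Measurable Bu := clmN_cont.measurable.comp hLtumeas
    -- CLM decompositions
    have hAuexp : ∀ s, Au s = B 0 + ∑ i : Fin nc, u s i • (B i.succ - B 0) := by
      intro s
      show clmN N (LVu s) = _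
      rw [hLVu s, map_add (clmN N), map_sum (clmN N)]
      congr 1
      refine Finset.sum_congr rfl fun i _ => ?_
      rw [map_smul (clmN N), map_sub (clmN N)]
      rfl
    have hBuexp : ∀ s, Bu s = Bt 0 m ω + ∑ i : Fin nc,
        u s i • (Bt i.succ m ω - Bt 0 m ω) := by
      intro s
      show clmN N (Ltu m ω s) = _
      rw [hLtu m ω s, map_add (clmN N), map_sum (clmN N)]
      congr 1
      refine Finset.sum_congr rfl fun i _ => ?_
      rw [map_smul (clmN N), map_sub (clmN N)]
      rfl
    -- a.e. bounds
    have hAb : ∀ᵐ s ∂(volume.restrict (Set.Icc (0 : ℝ) T)), ‖Au s‖ ≤ K₁ := by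
      filter_upwards [hKbd] with s hs
      rw [hAuexp s]
      calc ‖B 0 + ∑ i : Fin nc, u s i • (B i.succ - B 0)‖
          ≤ ‖B 0‖ + ‖∑ i : Fin nc, u s i • (B i.succ - B 0)‖ := norm_add_le _ _
      _ ≤ ‖B 0‖ + ∑ i : Fin nc, ‖u s i • (B i.succ - B 0)‖ :=
          add_le_add_right (norm_sum_le _ _) _
      _ ≤ ‖B 0‖ + ∑ i : Fin nc, K * ‖B i.succ - B 0‖ := by
          refine add_le_add_right (Finset.sum_le_sum fun i _ => ?_) _
          show ‖u s i • (B i.succ - B 0)‖ ≤ K * ‖B i.succ - B 0‖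
          have hns := norm_smul_le (u s i) (B i.succ - B 0)
          rw [Real.norm_eq_abs] at hns
          exact hns.trans (mul_le_mul_of_nonneg_right (hs i) (norm_nonneg _))
      _ = K₁ := rfl
    have hABb : ∀ᵐ s ∂(volume.restrict (Set.Icc (0 : ℝ) T)),
        ‖Au s - Bu s‖ ≤ η * c₁ := by
      filter_upwards [hKbd] with s hs
      have hsplit : Au s - Bu s = (B 0 - Bt 0 m ω) + ∑ i : Fin nc,
          u s i • ((B i.succ - Bt i.succ m ω) - (B 0 - Bt 0 m ω)) := by
        rw [hAuexp s, hBuexp s, add_sub_add_comm, ← Finset.sum_sub_distrib]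
        congr 1
        refine Finset.sum_congr rfl fun i _ => ?_
        show u s i • (B i.succ - B 0) - u s i • (Bt i.succ m ω - Bt 0 m ω)
            = u s i • ((B i.succ - Bt i.succ m ω) - (B 0 - Bt 0 m ω))
        module
      rw [hsplit]
      have hBtB : ∀ i, ‖B i - Bt i m ω‖ ≤ η := fun i => by
        rw [norm_sub_rev]; exact hωnrm i
      calc ‖(B 0 - Bt 0 m ω) + ∑ i : Fin nc,
          u s i • ((B i.succ - Bt i.succ m ω) - (B 0 - Bt 0 m ω))‖
          ≤ ‖B 0 - Bt 0 m ω‖ + ∑ i : Fin nc,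
            ‖u s i • ((B i.succ - Bt i.succ m ω) - (B 0 - Bt 0 m ω))‖ :=
          (norm_add_le _ _).trans (add_le_add_right (norm_sum_le _ _) _)
      _ ≤ η + ∑ i : Fin nc, K * (2 * η) := by
          refine add_le_add (hBtB 0) (Finset.sum_le_sum fun i _ => ?_)
          show ‖u s i • ((B i.succ - Bt i.succ m ω) - (B 0 - Bt 0 m ω))‖ ≤ K * (2 * η)
          have hns := norm_smul_le (u s i) ((B i.succ - Bt i.succ m ω) - (B 0 - Bt 0 m ω))
          rw [Real.norm_eq_abs] at hns
          refine hns.trans (mul_le_mul (hs i) ?_ (norm_nonneg _) hKnn)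
          calc ‖(B i.succ - Bt i.succ m ω) - (B 0 - Bt 0 m ω)‖
              ≤ ‖B i.succ - Bt i.succ m ω‖ + ‖B 0 - Bt 0 m ω‖ := norm_sub_le _ _
          _ ≤ 2 * η := by
              have := hBtB i.succ; have := hBtB 0; linarith
      _ = η * c₁ := by
          simp only [hc₁def, Finset.sum_const, Finset.card_univ, Fintype.card_fin,
            nsmul_eq_mul]
          ring
    have hBb : ∀ᵐ s ∂(volume.restrict (Set.Icc (0 : ℝ) T)), ‖Bu s‖ ≤ Kb := by
      filter_upwards [hAb, hABb] with s h1 h2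
      have h3 : ‖Bu s‖ ≤ ‖Au s‖ + ‖Au s - Bu s‖ := by
        have heq2 : Bu s = Au s - (Au s - Bu s) := by abel
        conv_lhs => rw [heq2]
        exact norm_sub_le _ _
      have hηc : η * c₁ ≤ c₁ := by nlinarith
      calc ‖Bu s‖ ≤ ‖Au s‖ + ‖Au s - Bu s‖ := h3
      _ ≤ K₁ + η * c₁ := add_le_add h1 h2
      _ ≤ K₁ + c₁ := by linarith
    -- the equations in the form used by the deterministic lemma
    have hzeq' : ∀ s ∈ Set.Icc (0 : ℝ) T,
        z s = z0 + ∫ r in (0 : ℝ)..s, Au r (z r) := fun s hs => hzeq s hs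
    have hzteq' : ∀ s ∈ Set.Icc (0 : ℝ) T,
        zt ω s = z0 + ∫ r in (0 : ℝ)..s, Bu r (zt ω r) := fun s hs => hzteq s hs
    have hdet := eDMD_det_aux hT hK₁nn hKbnn
      (mul_nonneg hηpos.le hc₁nn)
      hAumeas.aestronglyMeasurable hBumeas.aestronglyMeasurable
      hAb hBb hABb hzc hzeq' hztc hzteq' t ht
    -- final numeric estimate
    simp only [Set.mem_setOf_eq]
    refine hdet.trans ?_
    rw [gronwallBound_of_K_ne_0 (by positivity : Kb + 1 ≠ 0)]
    set a : ℝ := η * c₁ * (‖z0‖ * Real.exp ((K₁ + 1) * T)) with hadef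
    have haM : a = η * c₁ * M := rfl
    have hann : 0 ≤ a := by
      rw [haM]; positivity
    have hexp : Real.exp (K₂ * t) - 1 ≤ Real.exp (K₂ * T) := by
      have h1 : Real.exp (K₂ * t) ≤ Real.exp (K₂ * T) :=
        Real.exp_le_exp.mpr (mul_le_mul_of_nonneg_left ht.2 hK₂pos.le)
      linarith
    have hKbK₂ : Kb + 1 = K₂ := rfl
    rw [hKbK₂]
    have hstep : 0 * Real.exp (K₂ * t) + a / K₂ * (Real.exp (K₂ * t) - 1)
        ≤ a / K₂ * Real.exp (K₂ * T) := by
      rw [zero_mul, zero_add]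
      exact mul_le_mul_of_nonneg_left hexp (div_nonneg hann hK₂pos.le)
    refine hstep.trans ?_
    -- a / K₂ * exp(K₂ T) ≤ ε
    set e : ℝ := Real.exp (K₂ * T) with hedef
    have hepos : 0 < e := Real.exp_pos _
    have hη2 : η ≤ ε * K₂ / ((c₁ * M + 1) * e) := min_le_right _ _
    have hden : 0 < (c₁ * M + 1) * e := by positivity
    have h4 : η * ((c₁ * M + 1) * e) ≤ ε * K₂ := (le_div_iff₀ hden).mp hη2
    rw [div_mul_eq_mul_div, div_le_iff₀ hK₂pos]
    have h5 : a * e ≤ η * ((c₁ * M + 1) * e) := by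
      rw [haM]
      have : η * c₁ * M * e ≤ η * ((c₁ * M + 1) * e) := by nlinarith
      exact this
    linarith
  -- conclude
  have hcomplsub : (Egood m)ᶜ ⊆ Abad m₀ := by
    intro ω hω
    exact Set.mem_iUnion.mpr ⟨m, Set.mem_iUnion.mpr ⟨hm, hω⟩⟩
  have hPEc : P (Egood m)ᶜ ≤ ENNReal.ofReal δ :=
    le_trans (measure_mono hcomplsub) (hm₀ m₀ le_rfl)
  have hPE : ENNReal.ofReal (1 - δ) ≤ P (Egood m) := by
    have h1 : P (Egood m) = 1 - P (Egood m)ᶜ := by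
      rw [prob_compl_eq_one_sub (hEmeas m)]
      rw [ENNReal.sub_sub_cancel one_ne_top (prob_le_one)]
    rw [h1]
    calc ENNReal.ofReal (1 - δ) = 1 - ENNReal.ofReal δ := by
          rw [ENNReal.ofReal_sub 1 hδ.1.le, ENNReal.ofReal_one]
    _ ≤ 1 - P (Egood m)ᶜ := tsub_le_tsub_left hPEc 1
  have hPfinal : ENNReal.ofReal (1 - δ) ≤ P {ω | ‖z t - zt ω t‖ ≤ ε} :=
    le_trans hPE (measure_mono hsubE)
  have := ENNReal.toReal_mono (measure_ne_top P _) hPfinal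
  rwa [ENNReal.toReal_ofReal (by linarith [hδ.2] : (0:ℝ) ≤ 1 - δ)] at this
end
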